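/- Let p ≡ 3 (mod 4) be a prime and let U ⊆ F_p induce a transitive subtournament of the Paley tournament T_p, with |U| = u. Then for every integer x with 1 ≤ x ≤ u−1, one has x(u − x) ≤ (p−1)/2 + x. -/

import Mathlib

open Finset

/-- Quadratic character of `ZMod p`. -/
noncomputable def paleyChar (p : ℕ) (x : ZMod p) : ℤ :=
  open Classical in
  if x = 0 then 0 else if IsSquare x then 1 else -1

/-- `U` induces a transitive subtournament of the Paley tournament `T_p` (no directed cycles,
equivalently the arc relation `χ(x - y) = 1` is transitive on `U`). -/
def IsTransSubtournament (p : ℕ) (U : Finset (ZMod p)) : Prop :=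
  ∀ x ∈ U, ∀ y ∈ U, ∀ z ∈ U,
    paleyChar p (x - y) = 1 → paleyChar p (y - z) = 1 → paleyChar p (x - z) = 1

open Polynomial


lemma coeff_lagrange_basis {K : Type*} [Field K] [DecidableEq K] {A : Finset K} {c : K}
    (hc : c ∈ A) :
    (Lagrange.basis A id c).coeff (A.card - 1) = ∏ c' ∈ A.erase c, (c - c')⁻¹ := by
  have hinj : Set.InjOn (id : K → K) A := Set.injOn_id _
  have hdeg : (Lagrange.basis A id c).natDegree = A.card - 1 :=
    Lagrange.natDegree_basis hinj hc
  rw [← hdeg, ← leadingCoeff, Lagrange.basis, leadingCoeff_prod]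
  refine Finset.prod_congr rfl fun c' hc' => ?_
  have hne : (id c : K) ≠ id c' := by
    simp only [id]
    exact fun h => (Finset.mem_erase.mp hc').1 (h.symm)
  rw [Lagrange.basisDivisor, leadingCoeff_mul, leadingCoeff_C, leadingCoeff_X_sub_C, mul_one]
  rfl

lemma sum_lam_eval {K : Type*} [Field K] [DecidableEq K] {A : Finset K}
    {f : K[X]} (hf : f.degree < A.card) :
    ∑ c ∈ A, (∏ c' ∈ A.erase c, (c - c')⁻¹) * f.eval c = f.coeff (A.card - 1) := by
  have hinj : Set.InjOn (id : K → K) A := Set.injOn_id _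
  have h := Lagrange.eq_interpolate (f := f) hinj hf
  conv_rhs => rw [h]
  rw [Lagrange.interpolate_apply, finset_sum_coeff]
  refine Finset.sum_congr rfl fun c hc => ?_
  rw [coeff_C_mul, coeff_lagrange_basis hc]
  simp [mul_comm]

-- power sum lemmas
lemma sum_lam_pow_lt {K : Type*} [Field K] [DecidableEq K] {A : Finset K} (β : K) {j : ℕ}
    (hj : j < A.card - 1) :
    ∑ c ∈ A, (∏ c' ∈ A.erase c, (c - c')⁻¹) * (β - c) ^ j = 0 := by
  have hnd1 : (C β - X : K[X]).natDegree ≤ 1 := by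
    refine le_trans (natDegree_sub_le _ _) ?_
    simp
  have hnd : ((C β - X : K[X]) ^ j).natDegree ≤ j := by
    refine le_trans (natDegree_pow_le) ?_
    nlinarith
  have hdeg : ((C β - X : K[X]) ^ j).degree < A.card := by
    refine lt_of_le_of_lt (degree_le_natDegree) ?_
    exact_mod_cast lt_of_le_of_lt hnd (Nat.lt_of_lt_of_le hj (Nat.sub_le _ _))
  have := sum_lam_eval (A := A) hdeg
  have heval : ∀ c : K, ((C β - X : K[X]) ^ j).eval c = (β - c) ^ j := by
    intro c; simp
  rw [Finset.sum_congr rfl (fun c _ => by rw [heval c])] at this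
  rw [this, coeff_eq_zero_of_natDegree_lt]
  refine lt_of_le_of_lt ?_ hj
  refine le_trans (natDegree_pow_le) ?_
  have : (C β - X : K[X]).natDegree ≤ 1 := by
    refine le_trans (natDegree_sub_le _ _) ?_
    simp
  nlinarith [this]

lemma sum_lam_pow_eq {K : Type*} [Field K] [DecidableEq K] {A : Finset K} (hA : A.Nonempty)
    (β : K) :
    ∑ c ∈ A, (∏ c' ∈ A.erase c, (c - c')⁻¹) * (β - c) ^ (A.card - 1)
      = (-1 : K) ^ (A.card - 1) := by
  have hnd1 : (C β - X : K[X]).natDegree ≤ 1 := by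
    refine le_trans (natDegree_sub_le _ _) ?_
    simp
  have hnd : ((C β - X : K[X]) ^ (A.card - 1)).natDegree ≤ A.card - 1 := by
    refine le_trans (natDegree_pow_le) ?_
    nlinarith
  have hdeg : ((C β - X : K[X]) ^ (A.card - 1)).degree < A.card := by
    refine lt_of_le_of_lt (degree_le_natDegree) ?_
    exact_mod_cast lt_of_le_of_lt hnd (Nat.sub_lt hA.card_pos one_pos)
  have := sum_lam_eval (A := A) hdeg
  have heval : ∀ c : K, ((C β - X : K[X]) ^ (A.card - 1)).eval c = (β - c) ^ (A.card - 1) := by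
    intro c; simp
  rw [Finset.sum_congr rfl (fun c _ => by rw [heval c])] at this
  rw [this]
  have hrw : (C β - X : K[X]) ^ (A.card - 1) = (-1 : K[X]) ^ (A.card - 1) * (X - C β) ^ (A.card - 1) := by
    rw [← mul_pow]; ring_nf
  rw [hrw]
  have hmonic : ((X - C β : K[X]) ^ (A.card - 1)).Monic := (monic_X_sub_C β).pow _
  have hdeg2 : ((X - C β : K[X]) ^ (A.card - 1)).natDegree = A.card - 1 := by
    simp [natDegree_pow]
  have hcoeff1 : ((X - C β : K[X]) ^ (A.card - 1)).coeff (A.card - 1) = 1 := by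
    simpa [hdeg2] using hmonic.coeff_natDegree
  rw [← C_1, ← C_neg, ← C_pow, coeff_C_mul, hcoeff1, mul_one]


lemma stepanov_bound (p : ℕ) [hpp : Fact p.Prime] (hp2 : p % 2 = 1) {A B : Finset (ZMod p)}
    (hA : A.Nonempty) (hB : B.Nonempty)
    (h1 : ∀ c ∈ A, ∀ β ∈ B, (c - β) ^ (p / 2) = 1) :
    A.card * B.card + 1 ≤ p / 2 + A.card := by
  have hp3 : 3 ≤ p := by
    have := hpp.out.two_le
    rcases Nat.eq_or_lt_of_le this with h | h
    · omega
    · omega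
  set a := A.card with ha_def
  set m := p / 2 with hm_def
  have ham1 : 1 ≤ a := hA.card_pos
  have hm1 : 1 ≤ m := by omega
  -- a ≤ m
  obtain ⟨β₀, hβ₀⟩ := hB
  have ham : a ≤ m := by
    have hsub : A.image (fun c => c - β₀) ⊆ ((X : (ZMod p)[X]) ^ m - C 1).roots.toFinset := by
      intro d hd
      simp only [Finset.mem_image] at hd
      obtain ⟨c, hc, rfl⟩ := hd
      rw [Multiset.mem_toFinset, mem_roots (X_pow_sub_C_ne_zero (by omega) 1)]
      simp [IsRoot, h1 c hc β₀ hβ₀]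
    have hcardim : (A.image (fun c => c - β₀)).card = a :=
      Finset.card_image_of_injective _ (fun x y h => by rwa [sub_left_inj] at h)
    calc a = (A.image (fun c => c - β₀)).card := hcardim.symm
      _ ≤ ((X : (ZMod p)[X]) ^ m - C 1).roots.toFinset.card := Finset.card_le_card hsub
      _ ≤ Multiset.card ((X : (ZMod p)[X]) ^ m - C 1).roots := Multiset.toFinset_card_le _
      _ ≤ ((X : (ZMod p)[X]) ^ m - C 1).natDegree := card_roots' _
      _ = m := natDegree_X_pow_sub_C
  set N := m + (a - 1) with hN_def
  set lam : ZMod p → ZMod p := fun c => ∏ c' ∈ A.erase c, (c - c')⁻¹ with hlam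
  set F : (ZMod p)[X] := ∑ c ∈ A, C (lam c) * (X - C c) ^ N with hF
  set H : (ZMod p)[X] := F - C ((-1 : ZMod p) ^ N) with hH
  -- coefficients of the shifted polynomial vanish
  have key2 : ∀ β ∈ B, ∀ k, k < a → (H.comp (X + C β)).coeff k = 0 := by
    intro β hβ k hk
    have hcomp : H.comp (X + C β)
        = (∑ c ∈ A, C (lam c) * (X + C (β - c)) ^ N) - C ((-1 : ZMod p) ^ N) := by
      rw [hH, hF, sub_comp, Polynomial.sum_comp, C_comp]
      congr 1
      refine Finset.sum_congr rfl fun c hc => ?_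
      rw [mul_comp, C_comp, pow_comp, sub_comp, X_comp, C_comp]
      congr 1
      rw [add_sub_assoc, ← C_sub]
    rw [hcomp, coeff_sub, finset_sum_coeff]
    have hterm : ∀ c ∈ A, (C (lam c) * (X + C (β - c)) ^ N).coeff k
        = lam c * ((β - c) ^ (N - k) * (N.choose k : ZMod p)) := by
      intro c hc; rw [coeff_C_mul, coeff_X_add_C_pow]
    rw [Finset.sum_congr rfl hterm]
    have hsplit : ∀ c ∈ A, (β - c) ^ (N - k) = ((-1 : ZMod p) ^ m) * (β - c) ^ (a - 1 - k) := by
      intro c hc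
      have hNk : N - k = (a - 1 - k) + m := by omega
      have hbc : (β - c) = -(c - β) := by ring
      have h2 : (β - c) ^ m = (-1 : ZMod p) ^ m := by
        rw [hbc, neg_pow, h1 c hc β hβ, mul_one]
      rw [hNk, pow_add, h2]
      ring
    have hsum : ∑ c ∈ A, lam c * ((β - c) ^ (N - k) * (N.choose k : ZMod p))
        = (N.choose k : ZMod p) * ((-1 : ZMod p) ^ m)
          * ∑ c ∈ A, lam c * (β - c) ^ (a - 1 - k) := by
      rw [Finset.mul_sum]
      refine Finset.sum_congr rfl fun c hc => ?_
      rw [hsplit c hc]; ring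
    rw [hsum]
    by_cases hk0 : k = 0
    · subst hk0
      have : a - 1 - 0 = a - 1 := by omega
      rw [this, sum_lam_pow_eq hA β, coeff_C]
      simp only [if_pos rfl, Nat.choose_zero_right, Nat.cast_one, one_mul]
      rw [← pow_add]
      rw [hN_def]
      ring_nf
      simp [sub_self]
      rw [← ha_def]; ring
    · have hk1 : a - 1 - k < a - 1 := by omega
      rw [sum_lam_pow_lt β hk1, mul_zero, coeff_C, if_neg hk0, sub_zero]
  -- divisibility
  have key3 : ∀ β ∈ B, ((X : (ZMod p)[X]) - C β) ^ a ∣ H := by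
    intro β hβ
    have hdvdX : (X : (ZMod p)[X]) ^ a ∣ H.comp (X + C β) := by
      rw [X_pow_dvd_iff]
      exact fun d hd => key2 β hβ d hd
    obtain ⟨q, hq⟩ := hdvdX
    have hHcomp : (H.comp (X + C β)).comp (X - C β) = H := by
      rw [comp_assoc]
      simp
    rw [← hHcomp, hq, mul_comp, pow_comp, X_comp]
    exact Dvd.intro _ rfl
  -- H nonzero
  have hcoeffF : F.coeff m = ((-1 : ZMod p) ^ (a - 1)) * (N.choose m : ZMod p) := by
    rw [hF, finset_sum_coeff]
    have hterm : ∀ c ∈ A, (C (lam c) * (X - C c) ^ N).coeff m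
        = lam c * (((0 : ZMod p) - c) ^ (a - 1) * (N.choose m : ZMod p)) := by
      intro c hc
      rw [coeff_C_mul]
      have hXc : (X - C c : (ZMod p)[X]) = X + C (-c) := by rw [C_neg]; ring
      rw [hXc, coeff_X_add_C_pow]
      have hNm : N - m = a - 1 := by omega
      rw [hNm]
      congr 2
      ring
    rw [Finset.sum_congr rfl hterm]
    have : ∑ c ∈ A, lam c * (((0 : ZMod p) - c) ^ (a - 1) * (N.choose m : ZMod p))
        = (N.choose m : ZMod p) * ∑ c ∈ A, lam c * ((0 : ZMod p) - c) ^ (a - 1) := by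
      rw [Finset.mul_sum]
      exact Finset.sum_congr rfl fun c hc => by ring
    rw [this, sum_lam_pow_eq hA 0]
    ring
  have hchoose : (N.choose m : ZMod p) ≠ 0 := by
    rw [Ne, ZMod.natCast_eq_zero_iff]
    intro hdvd
    have hNp : N < p := by omega
    have hmN : m ≤ N := by omega
    have hfac := Nat.choose_mul_factorial_mul_factorial hmN
    have hp_dvd_fact : p ∣ Nat.factorial N := by
      rw [← hfac]
      exact Dvd.dvd.mul_right (Dvd.dvd.mul_right hdvd _) _
    have := (Nat.Prime.dvd_factorial hpp.out).mp hp_dvd_fact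
    omega
  have hHm : H.coeff m ≠ 0 := by
    rw [hH, coeff_sub, hcoeffF, coeff_C]
    have hm0 : m ≠ 0 := by omega
    rw [if_neg hm0, sub_zero]
    exact mul_ne_zero (pow_ne_zero _ (by norm_num)) hchoose
  have hH0 : H ≠ 0 := fun h => hHm (by rw [h, coeff_zero])
  -- degree bound
  have hdegH : H.natDegree ≤ N := by
    rw [hH]
    refine le_trans (natDegree_sub_le _ _) (max_le ?_ ?_)
    · rw [hF]
      refine natDegree_sum_le_of_forall_le _ _ fun c hc => ?_
      refine le_trans (natDegree_mul_le) ?_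
      simp [natDegree_pow]
    · simp
  -- product divides
  have hprod : (∏ β ∈ B, ((X : (ZMod p)[X]) - C β) ^ a) ∣ H := by
    refine Finset.prod_dvd_of_coprime ?_ fun β hβ => key3 β hβ
    intro β hβ β' hβ' hne
    exact (Polynomial.pairwise_coprime_X_sub_C Function.injective_id hne).pow
  have hdegprod : (∏ β ∈ B, ((X : (ZMod p)[X]) - C β) ^ a).natDegree = B.card * a := by
    rw [natDegree_prod _ _ fun β _ => ((monic_X_sub_C β).pow a).ne_zero]
    simp [natDegree_pow, mul_comm]
  have hfin := natDegree_le_of_dvd hprod hH0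
  rw [hdegprod] at hfin
  have : B.card * a ≤ N := le_trans hfin hdegH
  have hcomm : a * B.card = B.card * a := Nat.mul_comm _ _
  omega

section PaleyFacts
variable (p : ℕ) [hpp : Fact p.Prime]

lemma paleyChar_eq_one_iff {d : ZMod p} :
    paleyChar p d = 1 ↔ d ≠ 0 ∧ IsSquare d := by
  classical
  unfold paleyChar
  split_ifs with h1 h2
  · simp [h1]
  · simp [h1, h2]
  · simp [h1, h2]

lemma pow_half_eq_one_of_paleyChar {d : ZMod p} (h : paleyChar p d = 1) :
    d ^ (p / 2) = 1 := by
  obtain ⟨hd0, hd⟩ := (paleyChar_eq_one_iff p).mp h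
  exact (ZMod.euler_criterion p hd0).mp hd

lemma paley_total (hp4 : p % 4 = 3) {y z : ZMod p} (hyz : y ≠ z) :
    paleyChar p (y - z) = 1 ∨ paleyChar p (z - y) = 1 := by
  have hp3 : 3 ≤ p := by
    have h2 := hpp.out.two_le
    omega
  have hd0 : y - z ≠ 0 := sub_ne_zero_of_ne hyz
  by_cases h : IsSquare (y - z)
  · exact Or.inl ((paleyChar_eq_one_iff p).mpr ⟨hd0, h⟩)
  · right
    refine (paleyChar_eq_one_iff p).mpr ⟨sub_ne_zero_of_ne hyz.symm, ?_⟩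
    have hm : (y - z) ^ (p / 2) ≠ 1 := fun hc => h ((ZMod.euler_criterion p hd0).mpr hc)
    have hsq : ((y - z) ^ (p / 2)) * ((y - z) ^ (p / 2)) = 1 := by
      rw [← pow_add]
      have : p / 2 + p / 2 = p - 1 := by omega
      rw [this]
      exact ZMod.pow_card_sub_one_eq_one hd0
    have hneg : (y - z) ^ (p / 2) = -1 := by
      rcases mul_self_eq_one_iff.mp hsq with h1 | h1
      · exact absurd h1 hm
      · exact h1
    have hodd : Odd (p / 2) := by
      rw [Nat.odd_iff]; omega
    have : (z - y) ^ (p / 2) = 1 := by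
      have hzy : z - y = -(y - z) := by ring
      rw [hzy, hodd.neg_pow, hneg, neg_neg]
    exact (ZMod.euler_criterion p (sub_ne_zero_of_ne hyz.symm)).mpr this

lemma exists_top (U : Finset (ZMod p)) (hU : IsTransSubtournament p U) (hp4 : p % 4 = 3) :
    ∀ s : Finset (ZMod p), s ⊆ U → s.Nonempty →
      ∃ t ∈ s, ∀ y ∈ s, y ≠ t → paleyChar p (t - y) = 1 := by
  intro s
  induction s using Finset.induction_on with
  | empty => intro _ h; exact absurd h (by simp)
  | @insert w s' hw ih =>
    intro hsub hne
    have hs'U : s' ⊆ U := fun y hy => hsub (Finset.mem_insert_of_mem hy)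
    have hwU : w ∈ U := hsub (Finset.mem_insert_self _ _)
    rcases s'.eq_empty_or_nonempty with h' | h'
    · subst h'
      refine ⟨w, Finset.mem_insert_self _ _, fun y hy hyw => ?_⟩
      rcases Finset.mem_insert.mp hy with rfl | hy'
      · exact absurd rfl hyw
      · exact absurd hy' (Finset.notMem_empty y)
    · obtain ⟨t, ht, htop⟩ := ih hs'U h'
      by_cases hwt : paleyChar p (w - t) = 1
      · refine ⟨w, Finset.mem_insert_self _ _, fun y hy hyw => ?_⟩
        rcases Finset.mem_insert.mp hy with rfl | hy'
        · exact absurd rfl hyw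
        · by_cases hyt : y = t
          · subst hyt; exact hwt
          · exact hU w hwU t (hs'U ht) y (hs'U hy') hwt (htop y hy' hyt)
      · have hwt' : w ≠ t := fun h => hw (h ▸ ht)
        have htw : paleyChar p (t - w) = 1 := by
          rcases paley_total p hp4 hwt' with h | h
          · exact absurd h hwt
          · exact h
        refine ⟨t, Finset.mem_insert_of_mem ht, fun y hy hyt => ?_⟩
        rcases Finset.mem_insert.mp hy with rfl | hy'
        · exact htw
        · exact htop y hy' hyt

lemma peel (U : Finset (ZMod p)) (hU : IsTransSubtournament p U) (hp4 : p % 4 = 3) :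
    ∀ k, k ≤ U.card → ∃ A ⊆ U, A.card = k ∧
      ∀ c ∈ A, ∀ β ∈ U \ A, paleyChar p (c - β) = 1 := by
  intro k
  induction k with
  | zero => exact fun _ => ⟨∅, Finset.empty_subset _, Finset.card_empty, by simp⟩
  | succ k ih =>
    intro hk
    obtain ⟨A, hAsub, hAcard, hAdom⟩ := ih (by omega)
    have hsne : (U \ A).Nonempty := by
      rw [← Finset.card_pos, Finset.card_sdiff_of_subset hAsub]
      omega
    obtain ⟨t, ht, htop⟩ := exists_top p U hU hp4 (U \ A) (Finset.sdiff_subset) hsne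
    have htU : t ∈ U := (Finset.mem_sdiff.mp ht).1
    have htA : t ∉ A := (Finset.mem_sdiff.mp ht).2
    refine ⟨insert t A, ?_, ?_, ?_⟩
    · intro y hy
      rcases Finset.mem_insert.mp hy with rfl | hy'
      · exact htU
      · exact hAsub hy'
    · rw [Finset.card_insert_of_notMem htA, hAcard]
    · intro c hc β hβ
      have hβU : β ∈ U := (Finset.mem_sdiff.mp hβ).1
      have hβ' : β ∉ insert t A := (Finset.mem_sdiff.mp hβ).2
      have hβA : β ∉ A := fun h => hβ' (Finset.mem_insert_of_mem h)
      have hβt : β ≠ t := fun h => hβ' (h ▸ Finset.mem_insert_self _ _)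
      rcases Finset.mem_insert.mp hc with rfl | hc'
      · exact htop β (Finset.mem_sdiff.mpr ⟨hβU, hβA⟩) hβt
      · exact hAdom c hc' β (Finset.mem_sdiff.mpr ⟨hβU, hβA⟩)

end PaleyFacts

theorem transitive_subtournament_partition_bound (p : ℕ) [Fact p.Prime] (hp4 : p % 4 = 3)
    (U : Finset (ZMod p)) (hU : IsTransSubtournament p U) :
    ∀ x : ℕ, 1 ≤ x → x ≤ U.card - 1 → x * (U.card - x) ≤ (p - 1) / 2 + x := by
  intro x hx1 hx2
  have hp3 : 3 ≤ p := by
    have h2 := (Fact.out : p.Prime).two_le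
    omega
  have hu : x + 1 ≤ U.card := by omega
  obtain ⟨A, hAsub, hAcard, hAdom⟩ := peel p U hU hp4 x (by omega)
  have hAne : A.Nonempty := by
    rw [← Finset.card_pos, hAcard]; omega
  have hBcard : (U \ A).card = U.card - x := by
    rw [Finset.card_sdiff_of_subset hAsub, hAcard]
  have hBne : (U \ A).Nonempty := by
    rw [← Finset.card_pos, hBcard]; omega
  have hdom : ∀ c ∈ A, ∀ β ∈ U \ A, (c - β) ^ (p / 2) = 1 := fun c hc β hβ =>
    pow_half_eq_one_of_paleyChar p (hAdom c hc β hβ)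
  have := stepanov_bound p (by omega) hAne hBne hdom
  rw [hAcard, hBcard] at this
  omega
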